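/- If G is a 2-connected plane graph and C is a cycle in G, then the plane subgraph of G bounded by C (the subgraph induced by the edges lying on C together with those strictly inside its interior) is also 2-connected. -/

import Mathlib

open scoped Classical

/-- A topological drawing of a graph in the plane: vertices at distinct points,
edges as simple arcs meeting only at shared endpoints and avoiding other vertices. -/
structure Drawing {V : Type*} (G : SimpleGraph V) where
  pos : V → ℝ × ℝ
  inj : Function.Injective pos
  arc : Sym2 V → ℝ → ℝ × ℝ
  contOn : ∀ e ∈ G.edgeSet, ContinuousOn (arc e) (Set.Icc 0 1)
  injOn : ∀ e ∈ G.edgeSet, Set.InjOn (arc e) (Set.Icc 0 1)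
  ends : ∀ u v : V, G.Adj u v →
    (arc s(u, v) 0 = pos u ∧ arc s(u, v) 1 = pos v) ∨
    (arc s(u, v) 0 = pos v ∧ arc s(u, v) 1 = pos u)
  interMeet : ∀ e ∈ G.edgeSet, ∀ f ∈ G.edgeSet, e ≠ f →
    ∀ s ∈ Set.Icc (0:ℝ) 1, ∀ t ∈ Set.Icc (0:ℝ) 1,
      arc e s = arc f t → ∃ x : V, x ∈ e ∧ x ∈ f ∧ arc e s = pos x
  vertexMeet : ∀ e ∈ G.edgeSet, ∀ t ∈ Set.Ioo (0:ℝ) 1, ∀ x : V, arc e t ≠ pos x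

/-- A graph is planar if it admits a drawing in the plane. -/
def SimpleGraph.IsPlanar {V : Type*} (G : SimpleGraph V) : Prop := Nonempty (Drawing G)

/-- `G` contains a cycle of length exactly `k`. -/
def HasCycleLen {V : Type*} (G : SimpleGraph V) (k : ℕ) : Prop :=
  ∃ (v : V) (w : G.Walk v v), w.IsCycle ∧ w.length = k

/-- `G` contains a cycle of length at least `k`. -/
def HasCycleLenGe {V : Type*} (G : SimpleGraph V) (k : ℕ) : Prop :=
  ∃ (v : V) (w : G.Walk v v), w.IsCycle ∧ k ≤ w.length

/-- `G` contains two vertex-disjoint cycles, each of length `k` (a copy of `2C_k`). -/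
def HasTwoDisjointCyclesLen {V : Type*} (G : SimpleGraph V) (k : ℕ) : Prop :=
  ∃ (u v : V) (w₁ : G.Walk u u) (w₂ : G.Walk v v),
    w₁.IsCycle ∧ w₂.IsCycle ∧ w₁.length = k ∧ w₂.length = k ∧
    ∀ x, x ∈ w₁.support → x ∉ w₂.support

/-- Planar Turán number of the cycle `C_k`. -/
noncomputable def exPC (n k : ℕ) : ℕ :=
  sSup {m | ∃ G : SimpleGraph (Fin n), G.IsPlanar ∧ ¬ HasCycleLen G k ∧ m = G.edgeSet.ncard}

/-- Planar Turán number of `2C_k` (two disjoint `k`-cycles). -/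
noncomputable def exP2C (n k : ℕ) : ℕ :=
  sSup {m | ∃ G : SimpleGraph (Fin n), G.IsPlanar ∧ ¬ HasTwoDisjointCyclesLen G k ∧
    m = G.edgeSet.ncard}

/-- The graph induced by `G` on the vertex set `S` is 2-connected. -/
def TwoConnectedOn {V : Type*} (G : SimpleGraph V) (S : Set V) : Prop :=
  3 ≤ S.ncard ∧ (G.induce S).Connected ∧ ∀ v ∈ S, (G.induce (S \ {v})).Connected

/-- `B` has no cut vertex (with respect to `G` restricted to `B`). -/
def NoCutVertexOn {V : Type*} (G : SimpleGraph V) (B : Set V) : Prop :=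
  ∀ v ∈ B, (G.induce (B \ {v})).Connected

/-- `B` is a block of the graph induced by `G` on `A`: a maximal subset of `A`
inducing a connected subgraph without cut vertices. -/
def IsBlockOn {V : Type*} (G : SimpleGraph V) (A B : Set V) : Prop :=
  B ⊆ A ∧ B.Nonempty ∧ (G.induce B).Connected ∧ NoCutVertexOn G B ∧
    ∀ B', B ⊆ B' → B' ⊆ A → (G.induce B').Connected → NoCutVertexOn G B' → B' = B

/-- `B` is a block of `G`. -/
def IsBlock {V : Type*} (G : SimpleGraph V) (B : Set V) : Prop := IsBlockOn G Set.univ B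

/-- `v` is a cut vertex of `G`. -/
def IsCutVertex {V : Type*} (G : SimpleGraph V) (v : V) : Prop :=
  G.Connected ∧ ¬ (G.induce ({v}ᶜ : Set V)).Connected

/-- The list of (unordered) edges of the closed walk determined by a cyclic list. -/
def walkEdges {V : Type*} (l : List V) : List (Sym2 V) :=
  (l.zip (l.rotate 1)).map fun p => s(p.1, p.2)

/-- A combinatorial plane graph: a connected finite graph together with a family of faces,
each given by its boundary closed walk, such that each edge lies on exactly two face-walk
positions and Euler's formula holds; one face is designated as the outer face. -/
structure PlaneGraph (V : Type*) where
  graph : SimpleGraph V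
  vfin : Finite V
  conn : graph.Connected
  F : Type
  ffin : Finite F
  boundary : F → List V
  outer : F
  closedWalk : ∀ f : F, ∀ e ∈ walkEdges (boundary f), e ∈ graph.edgeSet
  edgeTwice : ∀ e ∈ graph.edgeSet, (∑ᶠ f : F, (walkEdges (boundary f)).count e) = 2
  euler : Nat.card V + Nat.card F = graph.edgeSet.ncard + 2

/-- A hole of a plane graph: an inner face whose boundary has length at least 4. -/
def PlaneGraph.IsHole {V : Type*} (P : PlaneGraph V) (f : P.F) : Prop :=
  f ≠ P.outer ∧ 4 ≤ (P.boundary f).length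

/-- The number `m(G)` of missing edges of a plane graph: the number of chords of holes
needed to turn it into a near-triangulation. -/
noncomputable def PlaneGraph.missing {V : Type*} (P : PlaneGraph V) : ℕ :=
  ∑ᶠ f : P.F, if P.IsHole f then (P.boundary f).length - 3 else 0

/-- A near-triangulation: a 2-connected plane graph all of whose inner faces are 3-faces. -/
def PlaneGraph.IsNearTriangulation {V : Type*} (P : PlaneGraph V) : Prop :=
  TwoConnectedOn P.graph Set.univ ∧ ∀ f : P.F, f ≠ P.outer → (P.boundary f).length = 3

/-- A circuit graph: a 2-connected plane graph whose outer face is bounded by a cycle `C`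
such that for every 2-cut `S`, every component of `G - S` contains a vertex of `C`. -/
def PlaneGraph.IsCircuitGraph {V : Type*} (P : PlaneGraph V) : Prop :=
  TwoConnectedOn P.graph Set.univ ∧ (P.boundary P.outer).Nodup ∧
    3 ≤ (P.boundary P.outer).length ∧
    ∀ S : Set V, S.ncard = 2 → ¬ (P.graph.induce (Sᶜ : Set V)).Connected →
      ∀ v : (Sᶜ : Set V), ∃ w : (Sᶜ : Set V),
        (P.graph.induce (Sᶜ : Set V)).Reachable v w ∧ (w : V) ∈ P.boundary P.outer

/-- The point set of a drawing restricted to the vertex set `S` and edge set `E`. -/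
def imageOn {V : Type*} {G : SimpleGraph V} (D : Drawing G) (S : Set V) (E : Set (Sym2 V)) :
    Set (ℝ × ℝ) :=
  (D.pos '' S) ∪ ⋃ e ∈ E, D.arc e '' Set.Icc 0 1

/-- The outer (unbounded) region of the drawing restricted to `S` and `E`. -/
def outerRegionOn {V : Type*} {G : SimpleGraph V} (D : Drawing G) (S : Set V)
    (E : Set (Sym2 V)) : Set (ℝ × ℝ) :=
  {x | x ∉ imageOn D S E ∧ ¬ Bornology.IsBounded (connectedComponentIn (imageOn D S E)ᶜ x)}

section Aux

variable {V : Type} {G : SimpleGraph V} (D : Drawing G) {v : V} (w : G.Walk v v)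

def cycK : Set (ℝ × ℝ) := ⋃ e' ∈ w.edges, D.arc e' '' Set.Icc 0 1

def innerSet : Set (ℝ × ℝ) :=
  {x | x ∉ cycK D w ∧ Bornology.IsBounded (connectedComponentIn (cycK D w)ᶜ x)}

def edgS : Set (Sym2 V) :=
  {e | e ∈ w.edges ∨ (e ∈ G.edgeSet ∧ D.arc e '' Set.Ioo 0 1 ⊆ innerSet D w)}

lemma cycK_compact : IsCompact (cycK D w) := by
  apply Set.Finite.isCompact_biUnion (List.finite_toSet w.edges)
  intro e he
  exact isCompact_Icc.image_of_continuousOn (D.contOn e (w.edges_subset_edgeSet he))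

lemma cycKc_open : IsOpen (cycK D w)ᶜ := (cycK_compact D w).isClosed.isOpen_compl

lemma same_comp {S : Set (ℝ × ℝ)} (hSc : S ⊆ (cycK D w)ᶜ) (hS : IsPreconnected S)
    {p q : ℝ × ℝ} (hp : p ∈ (cycK D w)ᶜ) (hpc : p ∈ closure S) (hq : q ∈ S) :
    connectedComponentIn (cycK D w)ᶜ p = connectedComponentIn (cycK D w)ᶜ q := by
  obtain ⟨U, hUsub, hUopen, hpU, hUconn⟩ :=
    locallyConnectedSpace_iff_subsets_isOpen_isConnected.mp (by infer_instance) p _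
      ((cycKc_open D w).mem_nhds hp)
  obtain ⟨q', hq'U, hq'S⟩ := mem_closure_iff.mp hpc U hUopen hpU
  have hun : IsPreconnected (U ∪ S) := hUconn.isPreconnected.union q' hq'U hq'S hS
  have hsub : U ∪ S ⊆ connectedComponentIn (cycK D w)ᶜ p :=
    hun.subset_connectedComponentIn (Or.inl hpU) (Set.union_subset hUsub hSc)
  exact connectedComponentIn_eq (hsub (Or.inr hq))

end Aux

section Aux2

variable {V : Type} {G : SimpleGraph V} (D : Drawing G) {v : V} (w : G.Walk v v)

lemma arc_int_subKc {e : Sym2 V} (heG : e ∈ G.edgeSet) (hew : e ∉ w.edges) :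
    D.arc e '' Set.Ioo 0 1 ⊆ (cycK D w)ᶜ := by
  rintro - ⟨t, ht, rfl⟩ hK
  obtain ⟨-, ⟨e', rfl⟩, hmem⟩ := hK
  obtain ⟨-, ⟨he', rfl⟩, s, hs, heq⟩ := hmem
  obtain ⟨x, -, -, hx⟩ := D.interMeet e heG e' (w.edges_subset_edgeSet he')
    (fun h => hew (h ▸ he')) t (Set.Ioo_subset_Icc_self ht) s hs heq.symm
  exact D.vertexMeet e heG t ht x hx

lemma pos_not_in_cycK {u : V} (hu : u ∉ w.support) : D.pos u ∉ cycK D w := by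
  intro hK
  obtain ⟨-, ⟨e', rfl⟩, hmem⟩ := hK
  obtain ⟨-, ⟨he', rfl⟩, s, hs, heq⟩ := hmem
  induction e' with
  | _ a b =>
    have hadj : G.Adj a b := w.edges_subset_edgeSet he'
    have hsupp : a ∈ w.support ∧ b ∈ w.support :=
      ⟨w.fst_mem_support_of_mem_edges he', w.snd_mem_support_of_mem_edges he'⟩
    rcases lt_or_eq_of_le hs.1 with h0 | h0
    · rcases lt_or_eq_of_le hs.2 with h1 | h1
      · exact D.vertexMeet _ (w.edges_subset_edgeSet he') s ⟨h0, h1⟩ u heq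
      · rcases D.ends a b hadj with ⟨-, h⟩ | ⟨-, h⟩
        · exact hu ((D.inj ((h1 ▸ heq).symm.trans h)) ▸ hsupp.2)
        · exact hu ((D.inj ((h1 ▸ heq).symm.trans h)) ▸ hsupp.1)
    · rcases D.ends a b hadj with ⟨h, -⟩ | ⟨h, -⟩
      · exact hu ((D.inj ((h0 ▸ heq).symm.trans h)) ▸ hsupp.1)
      · exact hu ((D.inj ((h0 ▸ heq).symm.trans h)) ▸ hsupp.2)

lemma ends_mem_closure {a b : V} (hadj : G.Adj a b) :
    D.pos a ∈ closure (D.arc s(a,b) '' Set.Ioo 0 1) ∧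
    D.pos b ∈ closure (D.arc s(a,b) '' Set.Ioo 0 1) := by
  have h1 : D.arc s(a,b) '' Set.Icc 0 1 ⊆ closure (D.arc s(a,b) '' Set.Ioo 0 1) := by
    have hco : ContinuousOn (D.arc s(a,b)) (closure (Set.Ioo 0 1)) := by
      rw [closure_Ioo one_ne_zero.symm]; exact D.contOn s(a,b) hadj
    have := hco.image_closure
    rwa [closure_Ioo one_ne_zero.symm] at this
  have h0m : D.arc s(a,b) 0 ∈ D.arc s(a,b) '' Set.Icc 0 1 :=
    ⟨0, Set.left_mem_Icc.2 zero_le_one, rfl⟩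
  have h1m : D.arc s(a,b) 1 ∈ D.arc s(a,b) '' Set.Icc 0 1 :=
    ⟨1, Set.right_mem_Icc.2 zero_le_one, rfl⟩
  rcases D.ends a b hadj with ⟨ha, hb⟩ | ⟨ha, hb⟩
  · exact ⟨ha ▸ h1 h0m, hb ▸ h1 h1m⟩
  · exact ⟨hb ▸ h1 h1m, ha ▸ h1 h0m⟩

lemma arcIoo_preconn (e : Sym2 V) (he : e ∈ G.edgeSet) :
    IsPreconnected (D.arc e '' Set.Ioo 0 1) :=
  (isPreconnected_Ioo).image _ ((D.contOn e he).mono Set.Ioo_subset_Icc_self)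

lemma arcIoo_nonempty (e : Sym2 V) : (D.arc e '' Set.Ioo 0 1).Nonempty :=
  ⟨_, ⟨(1:ℝ)/2, by norm_num, rfl⟩⟩

end Aux2

section Aux3

variable {V : Type} {G : SimpleGraph V} (D : Drawing G) {v : V} (w : G.Walk v v)

/-- interior of arc in the same component as endpoints -/
lemma arc_comp_eq {a b : V} (hadj : G.Adj a b) (ha : a ∉ w.support)
    {q : ℝ × ℝ} (hq : q ∈ D.arc s(a,b) '' Set.Ioo 0 1) :
    connectedComponentIn (cycK D w)ᶜ (D.pos a) = connectedComponentIn (cycK D w)ᶜ q := by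
  have hnw : s(a,b) ∉ w.edges := fun h => ha (w.fst_mem_support_of_mem_edges h)
  exact same_comp D w (arc_int_subKc D w hadj hnw) (arcIoo_preconn D _ hadj)
    (pos_not_in_cycK D w ha) (ends_mem_closure D hadj).1 hq

lemma edge_good {a b : V} (hadj : G.Adj a b) (ha : a ∉ w.support)
    (hin : D.pos a ∈ innerSet D w) :
    s(a,b) ∈ edgS D w ∧ (b ∈ w.support ∨ (b ∉ w.support ∧ D.pos b ∈ innerSet D w)) := by
  have hnw : s(a,b) ∉ w.edges := fun h => ha (w.fst_mem_support_of_mem_edges h)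
  have hsub : D.arc s(a,b) '' Set.Ioo 0 1 ⊆ innerSet D w := by
    intro q hq
    refine ⟨arc_int_subKc D w hadj hnw hq, ?_⟩
    rw [← arc_comp_eq D w hadj ha hq]
    exact hin.2
  refine ⟨Or.inr ⟨hadj, hsub⟩, ?_⟩
  by_cases hb : b ∈ w.support
  · exact Or.inl hb
  · refine Or.inr ⟨hb, pos_not_in_cycK D w hb, ?_⟩
    obtain ⟨q, hq⟩ := arcIoo_nonempty D s(a,b)
    have h1 : connectedComponentIn (cycK D w)ᶜ (D.pos b) = connectedComponentIn (cycK D w)ᶜ q := by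
      have : s(b,a) = s(a,b) := Sym2.eq_swap
      have hbs : b ∉ w.support := hb
      exact same_comp D w (arc_int_subKc D w hadj hnw) (arcIoo_preconn D _ hadj)
        (pos_not_in_cycK D w hb) (ends_mem_closure D hadj).2 hq
    rw [h1, ← arc_comp_eq D w hadj ha hq]
    exact hin.2

lemma edge_back {a b : V} (hadj : G.Adj a b) (ha : a ∉ w.support)
    (he : s(a,b) ∈ edgS D w) : D.pos a ∈ innerSet D w := by
  have hnw : s(a,b) ∉ w.edges := fun h => ha (w.fst_mem_support_of_mem_edges h)
  rcases he with h | ⟨-, hsub⟩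
  · exact absurd h hnw
  obtain ⟨q, hq⟩ := arcIoo_nonempty D s(a,b)
  refine ⟨pos_not_in_cycK D w ha, ?_⟩
  rw [arc_comp_eq D w hadj ha hq]
  exact (hsub hq).2

end Aux3

section Aux4

variable {V : Type} {G : SimpleGraph V} (D : Drawing G) {v : V} (w : G.Walk v v)

lemma mem_edge_of_mem_support' {u : V} : ∀ {a b : V} (p : G.Walk a b),
    u ∈ p.support → u ≠ b → ∃ x, s(u, x) ∈ p.edges := by
  intro a b p
  induction p with
  | nil => intro h hne; simp at h; exact absurd h hne
  | @cons a' c' b' h q ih =>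
    intro hm hne
    rw [SimpleGraph.Walk.support_cons, List.mem_cons] at hm
    rcases hm with rfl | hm
    · refine ⟨c', ?_⟩
      rw [SimpleGraph.Walk.edges_cons]
      exact List.mem_cons_self
    · obtain ⟨x, hx⟩ := ih hm hne
      exact ⟨x, by simp [hx]⟩

lemma cyc_mem_edge (hw : w.IsCycle) {u : V} (hu : u ∈ w.support) :
    ∃ x, s(u, x) ∈ w.edges := by
  by_cases huv : u = v
  · subst huv
    cases w with
    | nil => exact absurd rfl hw.ne_nil
    | @cons a' c' h q =>
      refine ⟨c', ?_⟩
      rw [SimpleGraph.Walk.edges_cons]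
      exact List.mem_cons_self
  · exact mem_edge_of_mem_support' w hu huv

lemma cyc_mem_T (hw : w.IsCycle) {u : V} (hu : u ∈ w.support) :
    u ∈ (SimpleGraph.fromEdgeSet (edgS D w)).support := by
  obtain ⟨x, hx⟩ := cyc_mem_edge w hw hu
  exact (SimpleGraph.mem_support _).2 ⟨x, by
    rw [SimpleGraph.fromEdgeSet_adj]
    exact ⟨Or.inl hx, (w.edges_subset_edgeSet hx).ne⟩⟩

lemma inside_of_mem_T {u : V} (hu : u ∈ (SimpleGraph.fromEdgeSet (edgS D w)).support)
    (hns : u ∉ w.support) : D.pos u ∈ innerSet D w := by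
  obtain ⟨y, hy⟩ := (SimpleGraph.mem_support _).1 hu
  rw [SimpleGraph.fromEdgeSet_adj] at hy
  have hadj : G.Adj u y := by
    rcases hy.1 with h | ⟨h, -⟩
    · exact w.edges_subset_edgeSet h
    · exact h
  exact edge_back D w hadj hns hy.1

lemma reach_of_walk {S : Set V} : ∀ {a b : V} (q : G.Walk a b)
    (hE : ∀ e ∈ q.edges, e ∈ edgS D w) (hS : ∀ z ∈ q.support, z ∈ S),
    ((SimpleGraph.fromEdgeSet (edgS D w)).induce S).Reachable
      ⟨a, hS a q.start_mem_support⟩ ⟨b, hS b q.end_mem_support⟩ := by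
  intro a b q
  induction q with
  | nil => intro _ _; rfl
  | cons h q ih =>
    intro hE hS
    refine SimpleGraph.Reachable.trans (SimpleGraph.Adj.reachable ?_)
      (ih (fun e he => hE e (by simp [he])) (fun z hz => hS z (by simp [hz])))
    have hme : s(_, _) ∈ edgS D w := hE _ (by
      rw [SimpleGraph.Walk.edges_cons]; exact List.mem_cons_self)
    exact ⟨hme, h.ne⟩

end Aux4

section Aux5

variable {V : Type} [DecidableEq V] {G : SimpleGraph V} (D : Drawing G) {v : V} (w : G.Walk v v)

lemma mem_support_rotate (hw : w.IsCycle) {x : V} (hx : x ∈ w.support) {c : V} :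
    c ∈ (w.rotate x hx).support ↔ c ∈ w.support := by
  constructor
  · intro hc
    obtain ⟨y, hy⟩ := cyc_mem_edge _ (hw.rotate hx) hc
    exact SimpleGraph.Walk.fst_mem_support_of_mem_edges w (((w.rotate_edges x hx).mem_iff).mp hy)
  · intro hc
    obtain ⟨y, hy⟩ := cyc_mem_edge _ hw hc
    exact SimpleGraph.Walk.fst_mem_support_of_mem_edges _ (((w.rotate_edges x hx).mem_iff).mpr hy)

lemma cyc_path_reach (hw : w.IsCycle) (x : V) {c₁ c₂ : V}
    (hc₁ : c₁ ∈ w.support) (hc₂ : c₂ ∈ w.support) (hx₁ : c₁ ≠ x) (hx₂ : c₂ ≠ x)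
    (h₁ : (c₁ : V) ∈ (SimpleGraph.fromEdgeSet (edgS D w)).support \ {x})
    (h₂ : (c₂ : V) ∈ (SimpleGraph.fromEdgeSet (edgS D w)).support \ {x}) :
    ((SimpleGraph.fromEdgeSet (edgS D w)).induce
      ((SimpleGraph.fromEdgeSet (edgS D w)).support \ {x})).Reachable ⟨c₁, h₁⟩ ⟨c₂, h₂⟩ := by
  set H := SimpleGraph.fromEdgeSet (edgS D w) with hH
  set T := H.support with hT
  by_cases hxw : x ∈ w.support
  · -- rotate the cycle to start at x
    set w' := w.rotate x hxw with hw'def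
    have hw' : w'.IsCycle := hw.rotate hxw
    have hmem : ∀ c, c ∈ w'.support ↔ c ∈ w.support := fun c => mem_support_rotate w hw hxw
    have hedg : ∀ e, e ∈ w'.edges ↔ e ∈ w.edges := fun e => (w.rotate_edges x hxw).mem_iff
    rcases hw'' : w' with _ | ⟨hadj, p⟩
    · exact absurd hw'' hw'.ne_nil
    · rename_i y
      have hpPath : p.IsPath := ((SimpleGraph.Walk.cons_isCycle_iff p hadj).mp (hw'' ▸ hw')).1
      have hpsup : ∀ z, z ∈ p.support → z ∈ w.support := by
        intro z hz
        rw [← hmem z, hw'', SimpleGraph.Walk.support_cons]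
        exact List.mem_cons_of_mem _ hz
      have hpedg : ∀ e, e ∈ p.edges → e ∈ w.edges := by
        intro e he
        rw [← hedg e, hw'', SimpleGraph.Walk.edges_cons]
        exact List.mem_cons_of_mem _ he
      have key : ∀ (c : V), c ∈ w.support → c ≠ x → ∀ (hcT : c ∈ T \ {x}) (hyT : y ∈ T \ {x}),
          (H.induce (T \ {x})).Reachable ⟨y, hyT⟩ ⟨c, hcT⟩ := by
        intro c hcw hcx hcT hyT
        have hcp : c ∈ p.support := by
          have hc' : c ∈ w'.support := (hmem c).mpr hcw
          rw [hw'', SimpleGraph.Walk.support_cons, List.mem_cons] at hc'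
          rcases hc' with h | h
          · exact absurd rfl (h ▸ hcx)
          · exact h
        set q := p.takeUntil c hcp with hq
        have hxq : x ∉ q.support := by
          intro hxqmem
          have hspec := p.take_spec hcp
          have hps : p.support = q.support ++ (p.dropUntil c hcp).support.tail := by
            rw [← SimpleGraph.Walk.support_append, hspec]
          have hnd := hpPath.support_nodup
          rw [hps, List.nodup_append] at hnd
          have hxd : x ∈ (p.dropUntil c hcp).support.tail := by
            have hxe : x ∈ (p.dropUntil c hcp).support := SimpleGraph.Walk.end_mem_support _
            rw [SimpleGraph.Walk.support_eq_cons, List.mem_cons] at hxe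
            rcases hxe with h | h
            · exact absurd h.symm hcx
            · exact h
          exact hnd.2.2 x hxqmem x hxd rfl
        have hqs : ∀ z ∈ q.support, z ∈ T \ {x} := by
          intro z hz
          have hzw : z ∈ w.support := hpsup z (p.support_takeUntil_subset hcp hz)
          exact ⟨cyc_mem_T D w hw hzw, fun h => hxq (h ▸ hz)⟩
        exact reach_of_walk D w q
          (fun e he => Or.inl (hpedg e (p.edges_takeUntil_subset hcp he))) hqs
      have hyw : y ∈ w.support := hpsup y p.start_mem_support
      have hyT : y ∈ T \ {x} := ⟨cyc_mem_T D w hw hyw, hadj.ne'⟩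
      exact (key c₁ hc₁ hx₁ h₁ hyT).symm.trans (key c₂ hc₂ hx₂ h₂ hyT)
  · -- x not on the cycle: use w itself from base v
    have hvT : v ∈ T \ {x} :=
      ⟨cyc_mem_T D w hw w.start_mem_support, fun h => hxw (h ▸ w.start_mem_support)⟩
    have key : ∀ (c : V), c ∈ w.support → ∀ (hcT : c ∈ T \ {x}),
        (H.induce (T \ {x})).Reachable ⟨v, hvT⟩ ⟨c, hcT⟩ := by
      intro c hcw hcT
      have hs : ∀ z ∈ (w.takeUntil c hcw).support, z ∈ T \ {x} := by
        intro z hz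
        have hzw := w.support_takeUntil_subset hcw hz
        exact ⟨cyc_mem_T D w hw hzw, fun h => hxw (h ▸ hzw)⟩
      exact reach_of_walk D w (w.takeUntil c hcw)
        (fun e he => Or.inl (w.edges_takeUntil_subset hcw he)) hs
    exact (key c₁ hc₁ h₁).symm.trans (key c₂ hc₂ h₂)

end Aux5

section Aux6

variable {V : Type} {G : SimpleGraph V} (D : Drawing G) {v : V} (w : G.Walk v v)

lemma reach_to_cycle (hw : w.IsCycle) (x : V) : ∀ {a b : V} (q : G.Walk a b),
    a ∉ w.support → D.pos a ∈ innerSet D w → b ∈ w.support → x ∉ q.support →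
    ∃ (c : V) (_ : c ∈ w.support) (_ : c ≠ x)
      (haT : a ∈ (SimpleGraph.fromEdgeSet (edgS D w)).support \ {x})
      (hcT : c ∈ (SimpleGraph.fromEdgeSet (edgS D w)).support \ {x}),
      ((SimpleGraph.fromEdgeSet (edgS D w)).induce
        ((SimpleGraph.fromEdgeSet (edgS D w)).support \ {x})).Reachable ⟨a, haT⟩ ⟨c, hcT⟩ := by
  intro a b q
  induction q with
  | nil => intro ha _ hb _; exact absurd hb ha
  | @cons a a' b h q ih =>
    intro ha hin hb hx
    rw [SimpleGraph.Walk.support_cons, List.mem_cons] at hx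
    push_neg at hx
    obtain ⟨hE, hcase⟩ := edge_good D w h ha hin
    have hAdj : (SimpleGraph.fromEdgeSet (edgS D w)).Adj a a' := ⟨hE, h.ne⟩
    have haT : a ∈ (SimpleGraph.fromEdgeSet (edgS D w)).support \ {x} :=
      ⟨⟨a', hAdj⟩, fun hh => hx.1 hh.symm⟩
    have ha'x : a' ≠ x := fun hh => hx.2 (hh ▸ q.start_mem_support)
    have ha'T : a' ∈ (SimpleGraph.fromEdgeSet (edgS D w)).support \ {x} :=
      ⟨⟨a, hAdj.symm⟩, ha'x⟩
    have hstep : ((SimpleGraph.fromEdgeSet (edgS D w)).induce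
        ((SimpleGraph.fromEdgeSet (edgS D w)).support \ {x})).Adj ⟨a, haT⟩ ⟨a', ha'T⟩ :=
      hAdj
    rcases hcase with h' | ⟨h'ns, h'in⟩
    · exact ⟨a', h', ha'x, haT, ha'T, hstep.reachable⟩
    · obtain ⟨c, hc1, hc2, haT', hcT, hr⟩ := ih h'ns h'in hb hx.2
      exact ⟨c, hc1, hc2, haT, hcT, hstep.reachable.trans hr⟩

lemma two_cyc_verts (hw : w.IsCycle) :
    ∃ c c' : V, c ∈ w.support ∧ c' ∈ w.support ∧ c ≠ c' := by
  have hnd := hw.support_nodup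
  have hlen : 2 ≤ w.support.tail.length := by
    have h1 := SimpleGraph.Walk.length_support w
    have h2 := hw.three_le_length
    have : w.support.tail.length = w.support.length - 1 := by simp
    omega
  match hl : w.support.tail, hlen with
  | c :: c' :: rest, _ =>
    rw [hl] at hnd
    refine ⟨c, c', ?_, ?_, ?_⟩
    · exact List.mem_of_mem_tail (hl ▸ List.mem_cons_self)
    · exact List.mem_of_mem_tail (hl ▸ List.mem_cons_of_mem _ List.mem_cons_self)
    · intro hcc
      rw [List.nodup_cons] at hnd
      exact hnd.1 (hcc ▸ List.mem_cons_self)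

end Aux6

section Aux7

variable {V : Type} [Finite V] {G : SimpleGraph V} (D : Drawing G) {v : V} (w : G.Walk v v)

lemma ncardT (hw : w.IsCycle) :
    3 ≤ (SimpleGraph.fromEdgeSet (edgS D w)).support.ncard := by
  classical
  have hnd := hw.support_nodup
  have hsub : {u | u ∈ w.support.tail} ⊆ (SimpleGraph.fromEdgeSet (edgS D w)).support :=
    fun u hu => cyc_mem_T D w hw (List.mem_of_mem_tail hu)
  have h1 : ({u | u ∈ w.support.tail} : Set V).ncard = w.support.tail.length := by
    rw [← List.coe_toFinset, Set.ncard_coe_finset, List.toFinset_card_of_nodup hnd]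
  have h2 : 3 ≤ w.support.tail.length := by
    have := SimpleGraph.Walk.length_support w
    have := hw.three_le_length
    have : w.support.tail.length = w.support.length - 1 := by simp
    omega
  calc (3:ℕ) ≤ ({u | u ∈ w.support.tail} : Set V).ncard := by omega
  _ ≤ _ := Set.ncard_le_ncard hsub (Set.toFinite _)

lemma Hconn_del (hw : w.IsCycle) (x : V)
    (hGx : (G.induce (Set.univ \ {x})).Connected) :
    ((SimpleGraph.fromEdgeSet (edgS D w)).induce
      ((SimpleGraph.fromEdgeSet (edgS D w)).support \ {x})).Connected := by
  classical
  set H := SimpleGraph.fromEdgeSet (edgS D w) with hH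
  set T := H.support with hT
  obtain ⟨c, c', hc, hc', hne⟩ := two_cyc_verts w hw
  obtain ⟨c₀, hc₀, hc₀x⟩ : ∃ c₀, c₀ ∈ w.support ∧ c₀ ≠ x := by
    by_cases h : c = x
    · exact ⟨c', hc', fun hh => hne (h ▸ hh ▸ rfl)⟩
    · exact ⟨c, hc, h⟩
  have hc₀T : c₀ ∈ T \ {x} := ⟨cyc_mem_T D w hw hc₀, hc₀x⟩
  rw [SimpleGraph.connected_iff]
  refine ⟨?_, ⟨⟨c₀, hc₀T⟩⟩⟩
  have key : ∀ (u : V) (hu : u ∈ T \ {x}),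
      ∃ (d : V) (_ : d ∈ w.support) (_ : d ≠ x) (hdT : d ∈ T \ {x}),
        (H.induce (T \ {x})).Reachable ⟨u, hu⟩ ⟨d, hdT⟩ := by
    intro u hu
    have hux : u ≠ x := hu.2
    by_cases husup : u ∈ w.support
    · exact ⟨u, husup, hux, hu, SimpleGraph.Reachable.refl _⟩
    · have hin : D.pos u ∈ innerSet D w := inside_of_mem_T D w hu.1 husup
      have huU : u ∈ Set.univ \ {x} := ⟨Set.mem_univ u, hux⟩
      have hc₀U : c₀ ∈ Set.univ \ {x} := ⟨Set.mem_univ c₀, hc₀x⟩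
      have hreach := hGx.preconnected ⟨u, huU⟩ ⟨c₀, hc₀U⟩
      refine hreach.elim fun p' => ?_
      let f : G.induce (Set.univ \ {x}) →g G := ⟨Subtype.val, fun {a b} hab => hab⟩
      have hq : ∃ q : G.Walk u c₀, x ∉ q.support := by
        refine ⟨p'.map f, ?_⟩
        intro hxs
        rw [SimpleGraph.Walk.support_map, List.mem_map] at hxs
        obtain ⟨z, -, hz⟩ := hxs
        exact z.2.2 hz
      obtain ⟨q, hxq⟩ := hq
      obtain ⟨d, hd1, hd2, haT, hdT, hr⟩ := reach_to_cycle D w hw x q husup hin hc₀ hxq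
      exact ⟨d, hd1, hd2, hdT, hr⟩
  rintro u₁ u₂
  obtain ⟨d₁, hd₁w, hd₁x, hd₁T, hr₁⟩ := key u₁.1 u₁.2
  obtain ⟨d₂, hd₂w, hd₂x, hd₂T, hr₂⟩ := key u₂.1 u₂.2
  have hmid := cyc_path_reach D w hw x hd₁w hd₂w hd₁x hd₂x hd₁T hd₂T
  exact (hr₁.trans (hmid.trans hr₂.symm))

lemma HconnT (hw : w.IsCycle)
    (hGx : ∀ x : V, (G.induce (Set.univ \ {x})).Connected) :
    ((SimpleGraph.fromEdgeSet (edgS D w)).induce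
      (SimpleGraph.fromEdgeSet (edgS D w)).support).Connected := by
  classical
  set H := SimpleGraph.fromEdgeSet (edgS D w) with hH
  set T := H.support with hT
  obtain ⟨c, c', hc, hc', hne⟩ := two_cyc_verts w hw
  rw [SimpleGraph.connected_iff]
  refine ⟨?_, ⟨⟨c, cyc_mem_T D w hw hc⟩⟩⟩
  rintro ⟨u₁, hu₁⟩ ⟨u₂, hu₂⟩
  by_cases heq : u₁ = u₂
  · subst heq; rfl
  obtain ⟨x, hx1, hx2⟩ : ∃ x : V, x ≠ u₁ ∧ x ≠ u₂ := by
    by_contra hcon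
    push_neg at hcon
    have hsub2 : T ⊆ {u₁, u₂} := by
      intro z hz
      by_cases h1 : z = u₁
      · exact Or.inl h1
      · exact Or.inr ((hcon z h1).symm ▸ rfl)
    have := Set.ncard_le_ncard hsub2 (Set.toFinite _)
    have hle : ({u₁, u₂} : Set V).ncard ≤ 2 := by
      have := Set.ncard_insert_le u₁ ({u₂} : Set V)
      simpa using this
    have h3 := ncardT D w hw
    rw [← hT] at h3
    omega
  have hu₁' : u₁ ∈ T \ {x} := ⟨hu₁, fun h => hx1 (by simpa using h.symm)⟩
  have hu₂' : u₂ ∈ T \ {x} := ⟨hu₂, fun h => hx2 (by simpa using h.symm)⟩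
  have hconn := Hconn_del D w hw x (hGx x)
  have hr := hconn.preconnected ⟨u₁, hu₁'⟩ ⟨u₂, hu₂'⟩
  let g : H.induce (T \ {x}) →g H.induce T := ⟨fun z => ⟨z.1, z.2.1⟩, fun {a b} hab => hab⟩
  have := hr.map g
  exact this

lemma mainlemma (hw : w.IsCycle) (h2 : TwoConnectedOn G Set.univ) :
    TwoConnectedOn (SimpleGraph.fromEdgeSet (edgS D w))
      (SimpleGraph.fromEdgeSet (edgS D w)).support := by
  refine ⟨ncardT D w hw, ?_, ?_⟩
  · refine HconnT D w hw fun x => ?_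
    have := h2.2.2 x (Set.mem_univ x)
    exact this
  · intro x hx
    exact Hconn_del D w hw x (h2.2.2 x (Set.mem_univ x))

end Aux7

/-- If `G` is a 2-connected plane graph and `C` is a cycle in `G`, then the plane subgraph
bounded by `C` (edges of `C` together with everything strictly inside its interior)
is also 2-connected. -/
theorem stmt0 {V : Type} [Finite V] (G : SimpleGraph V) (D : Drawing G)
    (h2 : TwoConnectedOn G Set.univ) (v : V) (w : G.Walk v v) (hw : w.IsCycle) :
    TwoConnectedOn
      (SimpleGraph.fromEdgeSet
        {e | e ∈ w.edges ∨ (e ∈ G.edgeSet ∧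
          D.arc e '' Set.Ioo 0 1 ⊆
            {x | x ∉ (⋃ e' ∈ w.edges, D.arc e' '' Set.Icc 0 1) ∧
              Bornology.IsBounded
                (connectedComponentIn (⋃ e' ∈ w.edges, D.arc e' '' Set.Icc 0 1)ᶜ x)})})
      (SimpleGraph.fromEdgeSet
        {e | e ∈ w.edges ∨ (e ∈ G.edgeSet ∧
          D.arc e '' Set.Ioo 0 1 ⊆
            {x | x ∉ (⋃ e' ∈ w.edges, D.arc e' '' Set.Icc 0 1) ∧
              Bornology.IsBounded
                (connectedComponentIn (⋃ e' ∈ w.edges, D.arc e' '' Set.Icc 0 1)ᶜ x)})}).support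
    := by
  exact mainlemma D w hw h2
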